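/- Let d be a positive integer and let S_1, ..., S_{d+1} be pairwise disjoint two-element sets of points in ℝ^d such that every d-element subset of ⋃_{i=1}^{d+1} S_i is linearly independent. Suppose T_0 ⊆ ⋃_{i=1}^{d+1} S_i is a colorful set (|T_0 ∩ S_i| ≤ 1 for all i) with 0 in the convex hull of T_0. Then there exists a colorful set T ⊆ ⋃_{i=1}^{d+1} S_i with T ≠ T_0 and 0 in the convex hull of T. -/

import Mathlib

open Finset

namespace AnotherColorful

variable {d : ℕ}

/-- Weight function witnessing `0 ∈ convexHull X`, supported on `X`. -/
def Wt (X : Finset (Fin d → ℝ)) (w : (Fin d → ℝ) → ℝ) : Prop :=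
  (∀ x, x ∉ X → w x = 0) ∧ (∀ x ∈ X, 0 ≤ w x) ∧
    ∑ x ∈ X, w x = 1 ∧ ∑ x ∈ X, w x • x = 0

def HasZero (X : Finset (Fin d → ℝ)) : Prop := ∃ w, Wt X w

lemma hasZero_iff (X : Finset (Fin d → ℝ)) :
    HasZero X ↔ (0 : Fin d → ℝ) ∈ convexHull ℝ (X : Set (Fin d → ℝ)) := by
  classical
  rw [Finset.convexHull_eq]
  constructor
  · rintro ⟨w, -, h0, h1, h2⟩
    refine ⟨w, h0, h1, ?_⟩
    rw [Finset.centerMass_eq_of_sum_1 _ _ h1]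
    simpa using h2
  · rintro ⟨w, h0, h1, h2⟩
    refine ⟨fun x => if x ∈ X then w x else 0, fun x hx => if_neg hx, ?_, ?_, ?_⟩
    · intro x hx; simp only [if_pos hx]; exact h0 x hx
    · rw [← h1]; exact Finset.sum_congr rfl fun x hx => if_pos hx
    · rw [Finset.centerMass_eq_of_sum_1 _ _ h1] at h2
      rw [← h2]
      refine Finset.sum_congr rfl fun x hx => ?_
      simp only [if_pos hx]
      rfl

variable {S : Fin (d + 1) → Finset (Fin d → ℝ)}

section Generic

variable (hcard : ∀ i, (S i).card = 2)
  (hdisj : ∀ i j, i ≠ j → Disjoint (S i) (S j))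
  (hgen : ∀ T : Finset (Fin d → ℝ),
      (T : Set (Fin d → ℝ)) ⊆ (⋃ i, (S i : Set (Fin d → ℝ))) → T.card = d →
      LinearIndependent ℝ (fun x : T => (x : Fin d → ℝ)))

lemma subset_iUnion {X : Finset (Fin d → ℝ)} (hX : X ⊆ Finset.univ.biUnion S) :
    (X : Set (Fin d → ℝ)) ⊆ ⋃ i, (S i : Set (Fin d → ℝ)) := by
  intro x hx
  obtain ⟨i, -, hi⟩ := Finset.mem_biUnion.mp (hX hx)
  exact Set.mem_iUnion.mpr ⟨i, hi⟩

include hcard hdisj in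
lemma card_U : (Finset.univ.biUnion S).card = 2 * (d + 1) := by
  rw [Finset.card_biUnion (fun i _ j _ hij => hdisj i j hij)]
  simp [hcard, mul_comm]

include hcard hdisj hgen in
/-- The origin is not in the convex hull of at most `d` of the points. -/
lemma no_small {V : Finset (Fin d → ℝ)} (hVU : V ⊆ Finset.univ.biUnion S)
    (hVc : V.card ≤ d) {w : (Fin d → ℝ) → ℝ} (hw : Wt V w) : False := by
  classical
  obtain ⟨V', hVV', hV'U, hV'c⟩ := Finset.exists_subsuperset_card_eq hVU hVc
    (by rw [card_U hcard hdisj]; omega)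
  have hli := hgen V' (subset_iUnion hV'U) hV'c
  have hsum : ∑ x ∈ V', w x • x = 0 := by
    rw [← Finset.sum_subset hVV' (fun x _ hx => by rw [hw.1 x hx, zero_smul])]
    exact hw.2.2.2
  have hz : ∀ x ∈ V', w x = 0 := by
    have := Fintype.linearIndependent_iff.mp hli (fun x : V' => w x) ?_
    · intro x hx; exact this ⟨x, hx⟩
    · rw [← hsum]
      rw [← Finset.sum_coe_sort V' (fun x => w x • x)]
  have : (1 : ℝ) = 0 := by
    rw [← hw.2.2.1]
    exact Finset.sum_eq_zero fun x hx => hz x (hVV' hx)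
  norm_num at this

include hcard hdisj hgen in
/-- Weights on a `(d+1)`-point set containing the origin are strictly positive. -/
lemma door_pos {Y : Finset (Fin d → ℝ)} (hYU : Y ⊆ Finset.univ.biUnion S)
    (hYc : Y.card = d + 1) {w : (Fin d → ℝ) → ℝ} (hw : Wt Y w) :
    ∀ y ∈ Y, 0 < w y := by
  classical
  intro y hy
  rcases lt_or_eq_of_le (hw.2.1 y hy) with h | h
  · exact h
  exfalso
  refine no_small hcard hdisj hgen (V := Y.erase y) ((Finset.erase_subset _ _).trans hYU)
    (by rw [Finset.card_erase_of_mem hy, hYc]; omega) (w := w) ?_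
  refine ⟨fun x hx => ?_, fun x hx => hw.2.1 x (Finset.mem_of_mem_erase hx), ?_, ?_⟩
  · by_cases hxy : x = y
    · rw [hxy, ← h]
    · exact hw.1 x fun hxY => hx (Finset.mem_erase.mpr ⟨hxy, hxY⟩)
  · rw [Finset.sum_erase _ (by rw [← h]), hw.2.2.1]
  · rw [Finset.sum_erase _ (by rw [← h]; exact zero_smul ℝ y), hw.2.2.2]

include hcard hdisj hgen in
/-- A `(d+1)`-point set containing `0` in its hull admits no nontrivial affine dependence. -/
lemma door_dep {Y : Finset (Fin d → ℝ)} (hYU : Y ⊆ Finset.univ.biUnion S)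
    (hYc : Y.card = d + 1) {w : (Fin d → ℝ) → ℝ} (hw : Wt Y w)
    {η : (Fin d → ℝ) → ℝ} (h1 : ∑ x ∈ Y, η x = 0) (h2 : ∑ x ∈ Y, η x • x = 0) :
    ∀ x ∈ Y, η x = 0 := by
  classical
  by_contra hcon
  push_neg at hcon
  obtain ⟨x₀, hx₀Y, hx₀⟩ := hcon
  have hF : (Y.filter (fun y => η y < 0)).Nonempty := by
    rw [Finset.filter_nonempty_iff]
    by_contra hno
    push_neg at hno
    have : ∀ x ∈ Y, η x = 0 :=
      (Finset.sum_eq_zero_iff_of_nonneg (fun x hx => hno x hx)).mp h1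
    exact hx₀ (this x₀ hx₀Y)
  obtain ⟨y₀, hy₀F, hy₀min⟩ := Finset.exists_min_image _ (fun y => w y / (-η y)) hF
  rw [Finset.mem_filter] at hy₀F
  obtain ⟨hy₀Y, hy₀neg⟩ := hy₀F
  set t := w y₀ / (-η y₀) with ht
  have hwpos := door_pos hcard hdisj hgen hYU hYc hw
  have htpos : 0 < t := div_pos (hwpos y₀ hy₀Y) (by linarith)
  set μ : (Fin d → ℝ) → ℝ := fun x => if x ∈ Y then w x + t * η x else 0 with hμ
  have hμy₀ : μ y₀ = 0 := by
    have hne : η y₀ ≠ 0 := ne_of_lt hy₀neg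
    have hb : μ y₀ = w y₀ + t * η y₀ := by simp [hμ, if_pos hy₀Y]
    rw [hb, ht, div_mul_eq_mul_div, div_neg, mul_div_assoc, div_self hne]
    ring
  have hμnn : ∀ x ∈ Y, 0 ≤ μ x := by
    intro x hx
    simp only [hμ, if_pos hx]
    rcases le_or_gt 0 (η x) with h | h
    · have := hw.2.1 x hx; nlinarith
    · have hmin := hy₀min x (Finset.mem_filter.mpr ⟨hx, h⟩)
      have : t * (-η x) ≤ w x := by
        rwa [← le_div_iff₀ (by linarith : (0:ℝ) < -η x)]
      nlinarith
  have hμ1 : ∑ x ∈ Y, μ x = 1 := by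
    have : ∑ x ∈ Y, μ x = ∑ x ∈ Y, (w x + t * η x) :=
      Finset.sum_congr rfl fun x hx => by simp [hμ, if_pos hx]
    rw [this, Finset.sum_add_distrib, hw.2.2.1, ← Finset.mul_sum, h1]
    ring
  have hμ2 : ∑ x ∈ Y, μ x • x = 0 := by
    have : ∑ x ∈ Y, μ x • x = ∑ x ∈ Y, (w x • x + t • (η x • x)) := by
      refine Finset.sum_congr rfl fun x hx => ?_
      simp only [hμ, if_pos hx, add_smul, smul_smul]
    rw [this, Finset.sum_add_distrib, hw.2.2.2, ← Finset.smul_sum, h2, smul_zero, add_zero]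
  refine no_small hcard hdisj hgen (V := Y.erase y₀) ((Finset.erase_subset _ _).trans hYU)
    (by rw [Finset.card_erase_of_mem hy₀Y, hYc]; omega) (w := μ) ?_
  refine ⟨fun x hx => ?_, fun x hx => hμnn x (Finset.mem_of_mem_erase hx), ?_, ?_⟩
  · by_cases hxy : x = y₀
    · rw [hxy, hμy₀]
    · simp only [hμ, if_neg (fun hxY => hx (Finset.mem_erase.mpr ⟨hxy, hxY⟩))]
  · rw [Finset.sum_erase _ hμy₀, hμ1]
  · rw [Finset.sum_erase _ (by rw [hμy₀]; exact zero_smul ℝ y₀), hμ2]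

/-- Any `d+2` points admit a nontrivial affine dependence. -/
lemma exists_dep {W : Finset (Fin d → ℝ)} (hWc : W.card = d + 2) :
    ∃ δ : (Fin d → ℝ) → ℝ, (∀ x, x ∉ W → δ x = 0) ∧ ∑ x ∈ W, δ x = 0 ∧
      ∑ x ∈ W, δ x • x = 0 ∧ ∃ x ∈ W, δ x ≠ 0 := by
  classical
  set lift : (Fin d → ℝ) → (Fin d → ℝ) × ℝ := fun x => (x, 1) with hlift
  have hinj : Function.Injective lift := fun a b h => (Prod.mk.injEq _ _ _ _ ▸ h).1
  set t : Finset ((Fin d → ℝ) × ℝ) := W.image lift with htdef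
  have htc : t.card = d + 2 := by
    rw [htdef, Finset.card_image_of_injective _ hinj, hWc]
  have hrank : Module.finrank ℝ ((Fin d → ℝ) × ℝ) < t.card := by
    rw [htc, Module.finrank_prod, Module.finrank_self, Module.finrank_pi]
    simp
  obtain ⟨f, hfsum, x₁, hx₁t, hx₁⟩ := Module.exists_nontrivial_relation_of_finrank_lt_card hrank
  set δ : (Fin d → ℝ) → ℝ := fun x => if x ∈ W then f (lift x) else 0 with hδ
  have hkey : ∑ x ∈ W, δ x • lift x = 0 := by
    rw [← hfsum, htdef, Finset.sum_image (fun a ha b hb h => hinj h)]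
    refine Finset.sum_congr rfl fun x hx => by simp [hδ, if_pos hx]
  have h1 : ∑ x ∈ W, δ x = 0 := by
    have := congrArg Prod.snd hkey
    rw [Prod.snd_sum] at this
    simpa [hlift] using this
  have h2 : ∑ x ∈ W, δ x • x = 0 := by
    have := congrArg Prod.fst hkey
    rw [Prod.fst_sum] at this
    simpa [hlift] using this
  obtain ⟨x₀, hx₀W, hx₀⟩ := Finset.mem_image.mp hx₁t
  exact ⟨δ, fun x hx => if_neg hx, h1, h2, x₀, hx₀W,
    by simp only [hδ, if_pos hx₀W, hx₀]; exact hx₁⟩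

lemma sum_comb {α M : Type*} [AddCommGroup M] [Module ℝ M] (W : Finset α)
    (f g h : α → ℝ) (a b c : ℝ) (v : α → M) :
    ∑ x ∈ W, (a * f x + b * g x + c * h x) • v x
      = a • ∑ x ∈ W, f x • v x + b • ∑ x ∈ W, g x • v x + c • ∑ x ∈ W, h x • v x := by
  rw [Finset.smul_sum, Finset.smul_sum, Finset.smul_sum, ← Finset.sum_add_distrib,
    ← Finset.sum_add_distrib]
  refine Finset.sum_congr rfl fun x hx => ?_
  rw [add_smul, add_smul, mul_smul, mul_smul, mul_smul]

lemma sum_comb' {α : Type*} (W : Finset α) (f g h : α → ℝ) (a b c : ℝ) :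
    ∑ x ∈ W, (a * f x + b * g x + c * h x)
      = a * ∑ x ∈ W, f x + b * ∑ x ∈ W, g x + c * ∑ x ∈ W, h x := by
  rw [Finset.mul_sum, Finset.mul_sum, Finset.mul_sum, ← Finset.sum_add_distrib,
    ← Finset.sum_add_distrib]

include hcard hdisj hgen in
lemma dep_vanish {W Y₀ : Finset (Fin d → ℝ)} (hWU : W ⊆ Finset.univ.biUnion S)
    (hY₀W : Y₀ ⊆ W) (hY₀c : Y₀.card = d + 1) {w : (Fin d → ℝ) → ℝ} (hw : Wt Y₀ w)
    {q₀ : Fin d → ℝ} (hq₀n : q₀ ∉ Y₀) (hWeq : W = insert q₀ Y₀)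
    {η : (Fin d → ℝ) → ℝ} (h1 : ∑ x ∈ W, η x = 0) (h2 : ∑ x ∈ W, η x • x = 0)
    (hq : η q₀ = 0) : ∀ x ∈ W, η x = 0 := by
  have h1' : ∑ x ∈ Y₀, η x = 0 := by
    rw [hWeq, Finset.sum_insert hq₀n, hq, zero_add] at h1; exact h1
  have h2' : ∑ x ∈ Y₀, η x • x = 0 := by
    rw [hWeq, Finset.sum_insert hq₀n, hq, zero_smul, zero_add] at h2; exact h2
  have hd := door_dep hcard hdisj hgen (hY₀W.trans hWU) hY₀c hw h1' h2'
  intro x hx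
  rw [hWeq, Finset.mem_insert] at hx
  rcases hx with rfl | hx
  · exact hq
  · exact hd x hx

/-- A door of `W` is the complement of a single point. -/
lemma door_erase {W Y : Finset (Fin d → ℝ)} (hWc : W.card = d + 2) (hYW : Y ⊆ W)
    (hYc : Y.card = d + 1) : ∃ q, q ∈ W ∧ q ∉ Y ∧ Y = W.erase q := by
  have hsd : (W \ Y).card = 1 := by rw [Finset.card_sdiff_of_subset hYW, hWc, hYc]; omega
  obtain ⟨q, hq⟩ := Finset.card_eq_one.mp hsd
  have hqW : q ∈ W := (Finset.mem_sdiff.mp (hq ▸ Finset.mem_singleton_self q)).1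
  have hqn : q ∉ Y := (Finset.mem_sdiff.mp (hq ▸ Finset.mem_singleton_self q)).2
  refine ⟨q, hqW, hqn, Finset.eq_of_subset_of_card_le
    (fun x hx => Finset.mem_erase.mpr ⟨fun h => hqn (h ▸ hx), hYW hx⟩) ?_⟩
  rw [Finset.card_erase_of_mem hqW, hWc, hYc]; omega

include hcard hdisj hgen in
/-- A set of `d+2` points cannot have three distinct doors. -/
lemma three_doors {W : Finset (Fin d → ℝ)} (hWU : W ⊆ Finset.univ.biUnion S)
    (hWc : W.card = d + 2) {Y₀ Y₁ Y₂ : Finset (Fin d → ℝ)}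
    (h0W : Y₀ ⊆ W) (h0c : Y₀.card = d + 1) (h0z : HasZero Y₀)
    (h1W : Y₁ ⊆ W) (h1c : Y₁.card = d + 1) (h1z : HasZero Y₁)
    (h2W : Y₂ ⊆ W) (h2c : Y₂.card = d + 1) (h2z : HasZero Y₂)
    (h01 : Y₀ ≠ Y₁) (h02 : Y₀ ≠ Y₂) (h12 : Y₁ ≠ Y₂) : False := by
  classical
  obtain ⟨w0, hw0⟩ := h0z
  obtain ⟨w1, hw1⟩ := h1z
  obtain ⟨w2, hw2⟩ := h2z
  obtain ⟨q₀, hq₀W, hq₀n, hY₀e⟩ := door_erase hWc h0W h0c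
  obtain ⟨q₁, hq₁W, hq₁n, hY₁e⟩ := door_erase hWc h1W h1c
  obtain ⟨q₂, hq₂W, hq₂n, hY₂e⟩ := door_erase hWc h2W h2c
  have hne01 : q₀ ≠ q₁ := fun h => h01 (by rw [hY₀e, hY₁e, h])
  have hne02 : q₀ ≠ q₂ := fun h => h02 (by rw [hY₀e, hY₂e, h])
  have hne12 : q₁ ≠ q₂ := fun h => h12 (by rw [hY₁e, hY₂e, h])
  -- memberships qᵢ ∈ Yⱼ for i ≠ j
  have hmem : ∀ q, q ∈ W → ∀ (Y : Finset (Fin d → ℝ)) (p : Fin d → ℝ), Y = W.erase p → q ≠ p →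
      q ∈ Y := fun q hq Y p hYp hqp => hYp ▸ Finset.mem_erase.mpr ⟨hqp, hq⟩
  have hq₀Y₁ : q₀ ∈ Y₁ := hmem q₀ hq₀W Y₁ q₁ hY₁e hne01
  have hq₀Y₂ : q₀ ∈ Y₂ := hmem q₀ hq₀W Y₂ q₂ hY₂e hne02
  have hq₁Y₀ : q₁ ∈ Y₀ := hmem q₁ hq₁W Y₀ q₀ hY₀e hne01.symm
  have hq₁Y₂ : q₁ ∈ Y₂ := hmem q₁ hq₁W Y₂ q₂ hY₂e hne12
  have hq₂Y₀ : q₂ ∈ Y₀ := hmem q₂ hq₂W Y₀ q₀ hY₀e hne02.symm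
  have hq₂Y₁ : q₂ ∈ Y₁ := hmem q₂ hq₂W Y₁ q₁ hY₁e hne12.symm
  have hp0 := door_pos hcard hdisj hgen (h0W.trans hWU) h0c hw0
  have hp1 := door_pos hcard hdisj hgen (h1W.trans hWU) h1c hw1
  have hp2 := door_pos hcard hdisj hgen (h2W.trans hWU) h2c hw2
  -- sums over W
  have hsum : ∀ (Y : Finset (Fin d → ℝ)) (w : (Fin d → ℝ) → ℝ), Y ⊆ W → Wt Y w →
      ∑ x ∈ W, w x = 1 ∧ ∑ x ∈ W, w x • x = 0 := by
    intro Y w hYW hw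
    constructor
    · rw [← Finset.sum_subset hYW (fun x _ hx => hw.1 x hx)]; exact hw.2.2.1
    · rw [← Finset.sum_subset hYW (fun x _ hx => by rw [hw.1 x hx, zero_smul])]
      exact hw.2.2.2
  obtain ⟨hs0, hv0⟩ := hsum Y₀ w0 h0W hw0
  obtain ⟨hs1, hv1⟩ := hsum Y₁ w1 h1W hw1
  obtain ⟨hs2, hv2⟩ := hsum Y₂ w2 h2W hw2
  set c₀ := w1 q₀ with hc₀
  set e₀ := w2 q₀ with he₀
  have hc₀pos : 0 < c₀ := hp1 q₀ hq₀Y₁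
  have he₀pos : 0 < e₀ := hp2 q₀ hq₀Y₂
  set θ : (Fin d → ℝ) → ℝ := fun x => e₀ * w1 x + (c₀ - e₀) * w0 x + (-c₀) * w2 x with hθ
  have hθ1 : ∑ x ∈ W, θ x = 0 := by
    rw [hθ]
    rw [sum_comb' W w1 w0 w2 e₀ (c₀ - e₀) (-c₀), hs0, hs1, hs2]; ring
  have hθ2 : ∑ x ∈ W, θ x • x = 0 := by
    rw [hθ]
    rw [sum_comb W w1 w0 w2 e₀ (c₀ - e₀) (-c₀) (fun x => x), hv0, hv1, hv2]
    simp
  have hθq₀ : θ q₀ = 0 := by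
    rw [hθ]; simp only [hw0.1 q₀ hq₀n]; ring
  have hWeq : W = insert q₀ Y₀ := by
    rw [hY₀e]; exact (Finset.insert_erase hq₀W).symm
  have hzero := dep_vanish hcard hdisj hgen hWU h0W h0c hw0 hq₀n hWeq hθ1 hθ2 hθq₀
  have hz1 := hzero q₁ hq₁W
  have hz2 := hzero q₂ hq₂W
  rw [hθ] at hz1 hz2
  simp only [hw1.1 q₁ hq₁n, hw2.1 q₂ hq₂n] at hz1 hz2
  -- hz1 : e₀ * 0 + (c₀ - e₀) * w0 q₁ + (-c₀) * w2 q₁ = 0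
  -- hz2 : e₀ * w1 q₂ + (c₀ - e₀) * w0 q₂ + (-c₀) * 0 = 0
  have hApos : 0 < w0 q₁ := hp0 q₁ hq₁Y₀
  have hBpos : 0 < w2 q₁ := hp2 q₁ hq₁Y₂
  have hapos : 0 < w0 q₂ := hp0 q₂ hq₂Y₀
  have hbpos : 0 < w1 q₂ := hp1 q₂ hq₂Y₁
  have hfin : e₀ * w1 q₂ * w0 q₁ + c₀ * w2 q₁ * w0 q₂ = 0 := by
    linear_combination w0 q₁ * hz2 - w0 q₂ * hz1
  nlinarith [mul_pos (mul_pos he₀pos hbpos) hApos, mul_pos (mul_pos hc₀pos hBpos) hapos]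

include hcard hdisj hgen in
/-- **Two doors lemma**: a set `W` of `d+2` points with a door `Y₀` has exactly one other
door. -/
lemma two_doors {W : Finset (Fin d → ℝ)} (hWU : W ⊆ Finset.univ.biUnion S)
    (hWc : W.card = d + 2) {Y₀ : Finset (Fin d → ℝ)} (hY₀W : Y₀ ⊆ W)
    (hY₀c : Y₀.card = d + 1) (hY₀z : HasZero Y₀) :
    ∃ Y₁, (Y₁ ⊆ W ∧ Y₁.card = d + 1 ∧ HasZero Y₁ ∧ Y₁ ≠ Y₀) ∧
      ∀ Z, Z ⊆ W → Z.card = d + 1 → HasZero Z → Z ≠ Y₀ → Z = Y₁ := by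
  classical
  obtain ⟨w, hw⟩ := hY₀z
  obtain ⟨q₀, hq₀W, hq₀n, hY₀e⟩ := door_erase hWc hY₀W hY₀c
  have hWeq : W = insert q₀ Y₀ := by
    rw [hY₀e]; exact (Finset.insert_erase hq₀W).symm
  have hwpos := door_pos hcard hdisj hgen (hY₀W.trans hWU) hY₀c hw
  have hw0 : w q₀ = 0 := hw.1 q₀ hq₀n
  have hwnnW : ∀ x ∈ W, 0 ≤ w x := by
    intro x hx
    rw [hWeq, Finset.mem_insert] at hx
    rcases hx with rfl | hx
    · rw [hw0]
    · exact hw.2.1 x hx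
  have hswW : ∑ x ∈ W, w x = 1 := by
    rw [hWeq, Finset.sum_insert hq₀n, hw0, zero_add, hw.2.2.1]
  have hsvW : ∑ x ∈ W, w x • x = 0 := by
    rw [hWeq, Finset.sum_insert hq₀n, hw0, zero_smul, zero_add, hw.2.2.2]
  obtain ⟨δ, hδs, hδ1, hδ2, x₁, hx₁W, hx₁⟩ := exists_dep (d := d) hWc
  have hδq₀ : δ q₀ ≠ 0 := by
    intro h0
    exact hx₁ (dep_vanish hcard hdisj hgen hWU hY₀W hY₀c hw hq₀n hWeq hδ1 hδ2 h0 x₁ hx₁W)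
  obtain ⟨ε, hεs, hε1, hε2, hεq₀⟩ :
      ∃ ε : (Fin d → ℝ) → ℝ, (∀ x, x ∉ W → ε x = 0) ∧ ∑ x ∈ W, ε x = 0 ∧
        ∑ x ∈ W, ε x • x = 0 ∧ 0 < ε q₀ := by
    rcases hδq₀.lt_or_gt with h | h
    · refine ⟨fun x => -δ x, fun x hx => by simp only [hδs x hx, neg_zero], ?_, ?_, by simpa using h⟩
      · rw [Finset.sum_neg_distrib, hδ1, neg_zero]
      · simp only [neg_smul]
        rw [Finset.sum_neg_distrib, hδ2, neg_zero]
    · exact ⟨δ, hδs, hδ1, hδ2, h⟩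
  have hF : (W.filter (fun y => ε y < 0)).Nonempty := by
    rw [Finset.filter_nonempty_iff]
    by_contra hno
    push_neg at hno
    have := (Finset.sum_eq_zero_iff_of_nonneg (fun x hx => hno x hx)).mp hε1
    exact absurd (this q₀ hq₀W) (by linarith)
  obtain ⟨y₁, hy₁F, hy₁min⟩ := Finset.exists_min_image _ (fun y => w y / (-ε y)) hF
  rw [Finset.mem_filter] at hy₁F
  obtain ⟨hy₁W, hy₁neg⟩ := hy₁F
  have hy₁q₀ : y₁ ≠ q₀ := fun h => by rw [h] at hy₁neg; linarith
  have hy₁Y₀ : y₁ ∈ Y₀ := by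
    have := hy₁W
    rw [hWeq, Finset.mem_insert] at this
    rcases this with h | h
    · exact absurd h hy₁q₀
    · exact h
  set t := w y₁ / (-ε y₁) with ht
  have htpos : 0 < t := div_pos (hwpos y₁ hy₁Y₀) (by linarith)
  set μ : (Fin d → ℝ) → ℝ := fun x => if x ∈ W then w x + t * ε x else 0 with hμ
  have hμy₁ : μ y₁ = 0 := by
    have hne : ε y₁ ≠ 0 := ne_of_lt hy₁neg
    have hb : μ y₁ = w y₁ + t * ε y₁ := by simp [hμ, if_pos hy₁W]
    rw [hb, ht, div_mul_eq_mul_div, div_neg, mul_div_assoc, div_self hne]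
    ring
  have hμnn : ∀ x ∈ W, 0 ≤ μ x := by
    intro x hx
    simp only [hμ, if_pos hx]
    rcases le_or_gt 0 (ε x) with h | h
    · have := hwnnW x hx; nlinarith
    · have hmin := hy₁min x (Finset.mem_filter.mpr ⟨hx, h⟩)
      have : t * (-ε x) ≤ w x := by
        rwa [← le_div_iff₀ (by linarith : (0:ℝ) < -ε x)]
      nlinarith
  have hμ1 : ∑ x ∈ W, μ x = 1 := by
    have : ∑ x ∈ W, μ x = ∑ x ∈ W, (w x + t * ε x) :=
      Finset.sum_congr rfl fun x hx => by simp [hμ, if_pos hx]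
    rw [this, Finset.sum_add_distrib, hswW, ← Finset.mul_sum, hε1]
    ring
  have hμ2 : ∑ x ∈ W, μ x • x = 0 := by
    have : ∑ x ∈ W, μ x • x = ∑ x ∈ W, (w x • x + t • (ε x • x)) := by
      refine Finset.sum_congr rfl fun x hx => ?_
      simp only [hμ, if_pos hx, add_smul, smul_smul]
    rw [this, Finset.sum_add_distrib, hsvW, ← Finset.smul_sum, hε2, smul_zero, add_zero]
  refine ⟨W.erase y₁, ⟨Finset.erase_subset _ _, ?_, ?_, ?_⟩, ?_⟩
  · rw [Finset.card_erase_of_mem hy₁W, hWc]; omega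
  · refine ⟨μ, fun x hx => ?_, fun x hx => hμnn x (Finset.mem_of_mem_erase hx), ?_, ?_⟩
    · by_cases hxy : x = y₁
      · rw [hxy, hμy₁]
      · simp only [hμ, if_neg (fun hxW => hx (Finset.mem_erase.mpr ⟨hxy, hxW⟩))]
    · rw [Finset.sum_erase _ hμy₁, hμ1]
    · rw [Finset.sum_erase _ (by rw [hμy₁]; exact zero_smul ℝ y₁), hμ2]
  · intro h
    exact hq₀n (h ▸ Finset.mem_erase.mpr ⟨Ne.symm hy₁q₀, hq₀W⟩)
  · intro Z hZW hZc hZz hZY₀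
    by_contra hZY₁
    exact three_doors hcard hdisj hgen hWU hWc hY₀W hY₀c ⟨w, hw⟩ hZW hZc hZz
      (Finset.erase_subset _ _) (by rw [Finset.card_erase_of_mem hy₁W, hWc]; omega)
      ⟨μ, by
        refine ⟨fun x hx => ?_, fun x hx => hμnn x (Finset.mem_of_mem_erase hx), ?_, ?_⟩
        · by_cases hxy : x = y₁
          · rw [hxy, hμy₁]
          · simp only [hμ, if_neg (fun hxW => hx (Finset.mem_erase.mpr ⟨hxy, hxW⟩))]
        · rw [Finset.sum_erase _ hμy₁, hμ1]
        · rw [Finset.sum_erase _ (by rw [hμy₁]; exact zero_smul ℝ y₁), hμ2]⟩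
      (Ne.symm hZY₀) (by
        intro h
        apply hq₀n
        rw [h]
        exact Finset.mem_erase.mpr ⟨Ne.symm hy₁q₀, hq₀W⟩)
      (fun h => hZY₁ h)

include hdisj in
lemma card_partition {X : Finset (Fin d → ℝ)} (hX : X ⊆ Finset.univ.biUnion S) :
    ∑ i, (X ∩ S i).card = X.card := by
  classical
  have hXeq : X = Finset.univ.biUnion (fun i => X ∩ S i) := by
    ext x
    simp only [Finset.mem_biUnion, Finset.mem_inter, Finset.mem_univ, true_and]
    constructor
    · intro hx
      obtain ⟨i, -, hi⟩ := Finset.mem_biUnion.mp (hX hx)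
      exact ⟨i, hx, hi⟩
    · rintro ⟨i, hx, -⟩; exact hx
  conv_rhs => rw [hXeq]
  rw [Finset.card_biUnion]
  intro i _ j _ hij
  exact (hdisj i j hij).mono Finset.inter_subset_right Finset.inter_subset_right

end Generic

end AnotherColorful

/-- **Finding Another Colorful Simplex (existence).** Given `d+1` pairwise disjoint
two-element sets of points in `ℝ^d` in general position with respect to the origin,
and a positively dependent colorful set `T₀`, there exists another positively dependent
colorful set `T ≠ T₀`. -/
theorem exists_another_colorful_simplex (d : ℕ) (hd : 0 < d)
    (S : Fin (d + 1) → Finset (Fin d → ℝ))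
    (hcard : ∀ i, (S i).card = 2)
    (hdisj : ∀ i j, i ≠ j → Disjoint (S i) (S j))
    (hgen : ∀ T : Finset (Fin d → ℝ),
      (T : Set (Fin d → ℝ)) ⊆ (⋃ i, (S i : Set (Fin d → ℝ))) → T.card = d →
      LinearIndependent ℝ (fun x : T => (x : Fin d → ℝ)))
    (T₀ : Finset (Fin d → ℝ))
    (hT₀sub : (T₀ : Set (Fin d → ℝ)) ⊆ ⋃ i, (S i : Set (Fin d → ℝ)))
    (hT₀col : ∀ i, (T₀ ∩ S i).card ≤ 1)
    (hT₀ : (0 : Fin d → ℝ) ∈ convexHull ℝ (T₀ : Set (Fin d → ℝ))) :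
    ∃ T : Finset (Fin d → ℝ),
      T ≠ T₀ ∧
      (T : Set (Fin d → ℝ)) ⊆ (⋃ i, (S i : Set (Fin d → ℝ))) ∧
      (∀ i, (T ∩ S i).card ≤ 1) ∧
      (0 : Fin d → ℝ) ∈ convexHull ℝ (T : Set (Fin d → ℝ)) := by
  classical
  set U : Finset (Fin d → ℝ) := Finset.univ.biUnion S with hUdef
  have memU : ∀ x : Fin d → ℝ, x ∈ (⋃ i, (S i : Set (Fin d → ℝ))) ↔ x ∈ U := by
    intro x
    simp [hUdef, Set.mem_iUnion, Finset.mem_biUnion]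
  have subU : ∀ (X : Finset (Fin d → ℝ)),
      ((X : Set (Fin d → ℝ)) ⊆ ⋃ i, (S i : Set (Fin d → ℝ))) ↔ X ⊆ U := by
    intro X
    constructor
    · intro h x hx
      exact (memU x).mp (h hx)
    · intro h x hx
      exact (memU x).mpr (h hx)
  -- state predicate
  set St : Finset (Fin d → ℝ) → Prop := fun X => X ⊆ U ∧ X.card = d + 1 ∧
    AnotherColorful.HasZero X ∧ ∀ i, i ≠ 0 → (X ∩ S i).card ≤ 1 with hStdef
  have cnt : ∀ {X : Finset (Fin d → ℝ)}, X ⊆ U → ∑ i, (X ∩ S i).card = X.card :=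
    fun hX => AnotherColorful.card_partition hdisj hX
  -- inner color count bounds for states
  have stS0 : ∀ {X : Finset (Fin d → ℝ)}, St X →
      1 ≤ (X ∩ S 0).card ∧ (X ∩ S 0).card ≤ 2 := by
    intro X hX
    constructor
    · have hsum := cnt hX.1
      have hsplit := Finset.add_sum_erase Finset.univ (fun i => (X ∩ S i).card)
        (Finset.mem_univ (0 : Fin (d + 1)))
      have hrest : ∑ i ∈ Finset.univ.erase (0 : Fin (d + 1)), (X ∩ S i).card ≤ d := by
        calc ∑ i ∈ Finset.univ.erase (0 : Fin (d + 1)), (X ∩ S i).card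
            ≤ ∑ i ∈ Finset.univ.erase (0 : Fin (d + 1)), 1 :=
              Finset.sum_le_sum (fun i hi => hX.2.2.2 i (Finset.mem_erase.mp hi).1)
          _ = d := by
              rw [Finset.sum_const, smul_eq_mul, mul_one, Finset.card_erase_of_mem
                (Finset.mem_univ _), Finset.card_univ, Fintype.card_fin]
              omega
      have hc := hX.2.1
      omega
    · calc (X ∩ S 0).card ≤ (S 0).card := Finset.card_le_card Finset.inter_subset_right
        _ = 2 := hcard 0
  have colorful_cnt : ∀ {X : Finset (Fin d → ℝ)}, St X → (X ∩ S 0).card ≤ 1 →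
      ∀ i, (X ∩ S i).card = 1 := by
    intro X hX h0 i
    have hball : ∀ j : Fin (d + 1), (X ∩ S j).card ≤ 1 := by
      intro j
      by_cases hj : j = 0
      · rw [hj]; exact h0
      · exact hX.2.2.2 j hj
    by_contra hne
    have hzero : (X ∩ S i).card = 0 := by have := hball i; omega
    have hsum := cnt hX.1
    have hsplit := Finset.add_sum_erase Finset.univ (fun j => (X ∩ S j).card)
      (Finset.mem_univ i)
    have hrest : ∑ j ∈ Finset.univ.erase i, (X ∩ S j).card ≤ d := by
      calc ∑ j ∈ Finset.univ.erase i, (X ∩ S j).card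
          ≤ ∑ j ∈ Finset.univ.erase i, 1 := Finset.sum_le_sum (fun j _ => hball j)
        _ = d := by
            rw [Finset.sum_const, smul_eq_mul, mul_one, Finset.card_erase_of_mem
              (Finset.mem_univ _), Finset.card_univ, Fintype.card_fin]
            omega
    have hc := hX.2.1
    omega
  have inter_cnt : ∀ {X : Finset (Fin d → ℝ)}, St X → (X ∩ S 0).card = 2 →
      ∃ j, j ≠ 0 ∧ (X ∩ S j).card = 0 ∧
        ∀ i, i ≠ 0 → i ≠ j → (X ∩ S i).card = 1 := by
    intro X hX h2
    have hsum := cnt hX.1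
    have hsplit := Finset.add_sum_erase Finset.univ (fun i => (X ∩ S i).card)
      (Finset.mem_univ (0 : Fin (d + 1)))
    have hc := hX.2.1
    set E : Finset (Fin (d + 1)) := Finset.univ.erase 0 with hEdef
    have hEcard : E.card = d := by
      rw [hEdef, Finset.card_erase_of_mem (Finset.mem_univ _), Finset.card_univ,
        Fintype.card_fin]
      omega
    have hEsum : ∑ i ∈ E, (X ∩ S i).card = d - 1 := by omega
    have hZsplit := Finset.sum_filter_add_sum_filter_not E (fun i => (X ∩ S i).card = 0)
      (fun i => (X ∩ S i).card)
    have hZzero : ∑ i ∈ E.filter (fun i => (X ∩ S i).card = 0), (X ∩ S i).card = 0 :=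
      Finset.sum_eq_zero (fun i hi => (Finset.mem_filter.mp hi).2)
    have hZone : ∑ i ∈ E.filter (fun i => ¬(X ∩ S i).card = 0), (X ∩ S i).card
        = (E.filter (fun i => ¬(X ∩ S i).card = 0)).card := by
      rw [Finset.card_eq_sum_ones]
      refine Finset.sum_congr rfl fun i hi => ?_
      obtain ⟨hiE, hine⟩ := Finset.mem_filter.mp hi
      have := hX.2.2.2 i (Finset.mem_erase.mp hiE).1
      omega
    have hZcards := Finset.card_filter_add_card_filter_not
      (s := E) (p := fun i => (X ∩ S i).card = 0)
    have hZcard : (E.filter (fun i => (X ∩ S i).card = 0)).card = 1 := by omega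
    obtain ⟨j, hj⟩ := Finset.card_eq_one.mp hZcard
    have hjZ : j ∈ E.filter (fun i => (X ∩ S i).card = 0) := hj ▸ Finset.mem_singleton_self j
    obtain ⟨hjE, hjzero⟩ := Finset.mem_filter.mp hjZ
    refine ⟨j, (Finset.mem_erase.mp hjE).1, hjzero, ?_⟩
    intro i hi0 hij
    have hiE : i ∈ E := Finset.mem_erase.mpr ⟨hi0, Finset.mem_univ _⟩
    have hiZ : i ∉ E.filter (fun i => (X ∩ S i).card = 0) := by
      rw [hj, Finset.mem_singleton]; exact hij
    have hine : ¬(X ∩ S i).card = 0 := fun h => hiZ (Finset.mem_filter.mpr ⟨hiE, h⟩)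
    have := hX.2.2.2 i hi0
    omega
  -- auxiliary: inserting a point of another color doesn't change a color class
  have hins_ne : ∀ (X : Finset (Fin d → ℝ)) (p : Fin d → ℝ) (i : Fin (d + 1)),
      p ∉ S i → (insert p X ∩ S i) = X ∩ S i := by
    intro X p i hp
    ext x
    simp only [Finset.mem_inter, Finset.mem_insert]
    constructor
    · rintro ⟨h1 | h1, h2⟩
      · exact absurd (h1 ▸ h2) hp
      · exact ⟨h1, h2⟩
    · rintro ⟨h1, h2⟩; exact ⟨Or.inr h1, h2⟩
  have htwo : ∀ (X : Finset (Fin d → ℝ)) (q : Fin d → ℝ) (i : Fin (d + 1)),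
      q ∈ S i → q ∉ X → 1 ≤ (X ∩ S i).card → (insert q X ∩ S i).card ≤ 1 → False := by
    intro X q i hqS hqX h1 hle
    obtain ⟨xi, hxi⟩ := Finset.card_pos.mp (by omega : 0 < (X ∩ S i).card)
    obtain ⟨hxiX, hxiS⟩ := Finset.mem_inter.mp hxi
    have hqxi : q ≠ xi := fun h => hqX (h ▸ hxiX)
    have hsub : ({q, xi} : Finset (Fin d → ℝ)) ⊆ insert q X ∩ S i := by
      intro z hz
      rcases Finset.mem_insert.mp hz with rfl | hz
      · exact Finset.mem_inter.mpr ⟨Finset.mem_insert_self _ _, hqS⟩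
      · rw [Finset.mem_singleton] at hz
        subst hz
        exact Finset.mem_inter.mpr ⟨Finset.mem_insert_of_mem hxiX, hxiS⟩
    have := Finset.card_le_card hsub
    rw [Finset.card_pair hqxi] at this
    omega
  -- the pivot graph
  let V := {X : Finset (Fin d → ℝ) // X ∈ U.powerset}
  let G : SimpleGraph V :=
    { Adj := fun A B => A.1 ≠ B.1 ∧ St A.1 ∧ St B.1 ∧ (A.1 ∪ B.1).card = d + 2 ∧
        ∀ i, i ≠ 0 → ((A.1 ∪ B.1) ∩ S i).card ≤ 1
      symm := ⟨by
        rintro A B ⟨h1, h2, h3, h4, h5⟩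
        exact ⟨Ne.symm h1, h3, h2, by rwa [Finset.union_comm],
          fun i hi => by rw [Finset.union_comm]; exact h5 i hi⟩⟩
      loopless := ⟨fun A h => h.1 rfl⟩ }
  -- unique neighbor through a given pivot point
  have keydeg : ∀ (A : V) (q : Fin d → ℝ), St A.1 → q ∈ U → q ∉ A.1 →
      (∀ i, i ≠ 0 → ((insert q A.1) ∩ S i).card ≤ 1) →
      ∃ B : V, G.Adj A B ∧ A.1 ∪ B.1 = insert q A.1 ∧
        ∀ C : V, G.Adj A C → A.1 ∪ C.1 = insert q A.1 → C = B := by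
    intro A q hA hqU hqA hcol
    have hWU : insert q A.1 ⊆ U := Finset.insert_subset hqU hA.1
    have hWc : (insert q A.1).card = d + 2 := by
      rw [Finset.card_insert_of_notMem hqA, hA.2.1]
    have hAW : A.1 ⊆ insert q A.1 := Finset.subset_insert _ _
    obtain ⟨Y₁, ⟨hY₁W, hY₁c, hY₁z, hY₁A⟩, huniq⟩ :=
      AnotherColorful.two_doors hcard hdisj hgen hWU hWc hAW hA.2.1 hA.2.2.1
    have hY₁U : Y₁ ⊆ U := hY₁W.trans hWU
    have hun : A.1 ∪ Y₁ = insert q A.1 := by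
      refine Finset.eq_of_subset_of_card_le (Finset.union_subset hAW hY₁W) ?_
      rw [hWc]
      by_contra hlt
      push_neg at hlt
      have h2 : A.1 ∪ Y₁ = A.1 := by
        refine (Finset.eq_of_subset_of_card_le Finset.subset_union_left ?_).symm
        have := hA.2.1
        omega
      have hsub : Y₁ ⊆ A.1 := by
        intro x hx
        rw [← h2]
        exact Finset.subset_union_right hx
      exact hY₁A (Finset.eq_of_subset_of_card_le hsub (by rw [hA.2.1, hY₁c]))
    have hStY₁ : St Y₁ := by
      refine ⟨hY₁U, hY₁c, hY₁z, fun i hi => ?_⟩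
      calc (Y₁ ∩ S i).card ≤ ((insert q A.1) ∩ S i).card :=
            Finset.card_le_card (Finset.inter_subset_inter hY₁W (Finset.Subset.refl _))
        _ ≤ 1 := hcol i hi
    refine ⟨⟨Y₁, Finset.mem_powerset.mpr hY₁U⟩, ⟨Ne.symm hY₁A, hA, hStY₁, ?_, ?_⟩, hun, ?_⟩
    · rw [hun]; exact hWc
    · intro i hi; rw [hun]; exact hcol i hi
    · intro C hC hCun
      have hCW : C.1 ⊆ insert q A.1 := by
        rw [← hCun]; exact Finset.subset_union_right
      exact Subtype.ext (huniq C.1 hCW hC.2.2.1.2.1 hC.2.2.1.2.2.1 (Ne.symm hC.1))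
  -- every neighbor comes from a pivot point
  have nbrW : ∀ A B : V, G.Adj A B → ∃ q, q ∈ U ∧ q ∉ A.1 ∧
      A.1 ∪ B.1 = insert q A.1 := by
    intro A B hAB
    obtain ⟨hne, hA, hB, hcard2, hcol⟩ := hAB
    have hAc := hA.2.1
    have h1 : (B.1 \ A.1).card = 1 := by
      have hh := Finset.card_sdiff_add_card B.1 A.1
      rw [Finset.union_comm, hcard2] at hh
      omega
    obtain ⟨q, hq⟩ := Finset.card_eq_one.mp h1
    have hqB : q ∈ B.1 := (Finset.mem_sdiff.mp (hq ▸ Finset.mem_singleton_self q)).1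
    have hqA : q ∉ A.1 := (Finset.mem_sdiff.mp (hq ▸ Finset.mem_singleton_self q)).2
    refine ⟨q, hB.1 hqB, hqA, ?_⟩
    apply Finset.Subset.antisymm
    · intro x hx
      rcases Finset.mem_union.mp hx with h | h
      · exact Finset.mem_insert_of_mem h
      · by_cases hxA : x ∈ A.1
        · exact Finset.mem_insert_of_mem hxA
        · have hxs : x ∈ B.1 \ A.1 := Finset.mem_sdiff.mpr ⟨h, hxA⟩
          rw [hq, Finset.mem_singleton] at hxs
          subst hxs
          exact Finset.mem_insert_self _ _
    · intro x hx
      rcases Finset.mem_insert.mp hx with rfl | h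
      · exact Finset.mem_union_right _ hqB
      · exact Finset.mem_union_left _ h
    -- colorful states have degree 1
  have degColorful : ∀ A : V, St A.1 → (A.1 ∩ S 0).card ≤ 1 → G.degree A = 1 := by
    intro A hA hA0
    have hcnt := colorful_cnt hA hA0
    obtain ⟨x₀, hx₀⟩ := Finset.card_eq_one.mp (hcnt 0)
    have hx₀mem : x₀ ∈ A.1 ∩ S 0 := hx₀ ▸ Finset.mem_singleton_self x₀
    have hx₀A : x₀ ∈ A.1 := (Finset.mem_inter.mp hx₀mem).1
    have hx₀S : x₀ ∈ S 0 := (Finset.mem_inter.mp hx₀mem).2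
    have herase : ((S 0).erase x₀).card = 1 := by
      rw [Finset.card_erase_of_mem hx₀S, hcard 0]
    obtain ⟨y', hy'⟩ := Finset.card_eq_one.mp herase
    have hy'mem : y' ∈ (S 0).erase x₀ := hy' ▸ Finset.mem_singleton_self y'
    have hy'S : y' ∈ S 0 := Finset.mem_of_mem_erase hy'mem
    have hy'x₀ : y' ≠ x₀ := (Finset.mem_erase.mp hy'mem).1
    have hy'A : y' ∉ A.1 := by
      intro h
      have hmem : y' ∈ A.1 ∩ S 0 := Finset.mem_inter.mpr ⟨h, hy'S⟩
      rw [hx₀, Finset.mem_singleton] at hmem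
      exact hy'x₀ hmem
    have hy'U : y' ∈ U := Finset.mem_biUnion.mpr ⟨0, Finset.mem_univ _, hy'S⟩
    have hcolins : ∀ i, i ≠ (0 : Fin (d + 1)) → ((insert y' A.1) ∩ S i).card ≤ 1 := by
      intro i hi
      have hy'Si : y' ∉ S i := fun h => Finset.disjoint_left.mp (hdisj 0 i (Ne.symm hi)) hy'S h
      rw [hins_ne A.1 y' i hy'Si]
      exact hA.2.2.2 i hi
    obtain ⟨B₀, hAdjB₀, hunB₀, huniqB₀⟩ := keydeg A y' hA hy'U hy'A hcolins
    have hNF : G.neighborFinset A = {B₀} := by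
      ext C
      rw [SimpleGraph.mem_neighborFinset, Finset.mem_singleton]
      constructor
      · intro hC
        obtain ⟨q, hqU, hqA, hq⟩ := nbrW A C hC
        have hq0 : q ∈ S 0 := by
          obtain ⟨i, -, hi⟩ := Finset.mem_biUnion.mp hqU
          by_contra h0
          have hi0 : i ≠ 0 := fun h => h0 (h ▸ hi)
          refine htwo A.1 q i hi hqA (by rw [hcnt i]) ?_
          have hle := hC.2.2.2.2 i hi0
          rwa [hq] at hle
        have hqy' : q = y' := by
          have hqx₀ : q ≠ x₀ := fun h => hqA (h ▸ hx₀A)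
          have hmem : q ∈ (S 0).erase x₀ := Finset.mem_erase.mpr ⟨hqx₀, hq0⟩
          rw [hy', Finset.mem_singleton] at hmem
          exact hmem
        exact huniqB₀ C hC (by rw [hq, hqy'])
      · intro h
        exact h ▸ hAdjB₀
    rw [← SimpleGraph.card_neighborFinset_eq_degree, hNF, Finset.card_singleton]
  -- intermediate states have degree 2
  have degInter : ∀ A : V, St A.1 → (A.1 ∩ S 0).card = 2 → G.degree A = 2 := by
    intro A hA hA2
    obtain ⟨j, hj0, hjmiss, hjrest⟩ := inter_cnt hA hA2
    obtain ⟨p₁, p₂, hp12, hSj⟩ := Finset.card_eq_two.mp (hcard j)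
    have hp₁S : p₁ ∈ S j := by rw [hSj]; simp
    have hp₂S : p₂ ∈ S j := by rw [hSj]; simp
    have hpA : ∀ p ∈ S j, p ∉ A.1 := by
      intro p hp hpmem
      have hmem : p ∈ A.1 ∩ S j := Finset.mem_inter.mpr ⟨hpmem, hp⟩
      rw [Finset.card_eq_zero.mp hjmiss] at hmem
      exact absurd hmem (Finset.notMem_empty p)
    have hUj : ∀ p ∈ S j, p ∈ U := fun p hp =>
      Finset.mem_biUnion.mpr ⟨j, Finset.mem_univ _, hp⟩
    have hinscol : ∀ p ∈ S j, ∀ i, i ≠ (0 : Fin (d + 1)) →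
        ((insert p A.1) ∩ S i).card ≤ 1 := by
      intro p hp i hi
      by_cases hij : i = j
      · subst hij
        have hsub : (insert p A.1) ∩ S i ⊆ {p} := by
          intro x hx
          obtain ⟨hx1, hx2⟩ := Finset.mem_inter.mp hx
          rcases Finset.mem_insert.mp hx1 with rfl | hxA
          · exact Finset.mem_singleton_self _
          · exact absurd hxA (hpA x hx2)
        calc ((insert p A.1) ∩ S i).card ≤ ({p} : Finset (Fin d → ℝ)).card :=
              Finset.card_le_card hsub
          _ = 1 := Finset.card_singleton _
      · have hpSi : p ∉ S i :=
          fun h => Finset.disjoint_left.mp (hdisj j i (fun h' => hij h'.symm)) hp h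
        rw [hins_ne A.1 p i hpSi]
        exact hA.2.2.2 i hi
    obtain ⟨B₁, hAdj₁, hun₁, huniq₁⟩ :=
      keydeg A p₁ hA (hUj p₁ hp₁S) (hpA p₁ hp₁S) (hinscol p₁ hp₁S)
    obtain ⟨B₂, hAdj₂, hun₂, huniq₂⟩ :=
      keydeg A p₂ hA (hUj p₂ hp₂S) (hpA p₂ hp₂S) (hinscol p₂ hp₂S)
    have hB₁₂ : B₁ ≠ B₂ := by
      intro h
      have hsub : B₁.1 ⊆ A.1 := by
        intro x hx
        have h1 : x ∈ A.1 ∪ B₁.1 := Finset.mem_union_right _ hx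
        have h2 : x ∈ A.1 ∪ B₂.1 := Finset.mem_union_right _ (h ▸ hx)
        rw [hun₁] at h1
        rw [hun₂] at h2
        rcases Finset.mem_insert.mp h2 with heq2 | h2
        · rcases Finset.mem_insert.mp h1 with heq1 | h1
          · exact absurd (heq1.symm.trans heq2) hp12
          · exact h1
        · exact h2
      have heq : B₁.1 = A.1 :=
        Finset.eq_of_subset_of_card_le hsub (by rw [hA.2.1, hAdj₁.2.2.1.2.1])
      exact hAdj₁.1 heq.symm
    have hNF : G.neighborFinset A = {B₁, B₂} := by
      ext C
      rw [SimpleGraph.mem_neighborFinset, Finset.mem_insert, Finset.mem_singleton]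
      constructor
      · intro hC
        obtain ⟨q, hqU, hqA, hq⟩ := nbrW A C hC
        have hqj : q ∈ S j := by
          obtain ⟨i, -, hi⟩ := Finset.mem_biUnion.mp hqU
          by_cases hij : i = j
          · exact hij ▸ hi
          by_cases hi0 : i = 0
          · exfalso
            subst hi0
            have hS0A : A.1 ∩ S 0 = S 0 :=
              Finset.eq_of_subset_of_card_le Finset.inter_subset_right
                (by rw [hA2, hcard 0])
            have : q ∈ A.1 ∩ S 0 := by rw [hS0A]; exact hi
            exact hqA (Finset.mem_inter.mp this).1
          · exfalso
            refine htwo A.1 q i hi hqA (by rw [hjrest i hi0 hij]) ?_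
            have hle := hC.2.2.2.2 i hi0
            rwa [hq] at hle
        rw [hSj, Finset.mem_insert, Finset.mem_singleton] at hqj
        rcases hqj with rfl | rfl
        · exact Or.inl (huniq₁ C hC hq)
        · exact Or.inr (huniq₂ C hC hq)
      · rintro (rfl | rfl)
        exacts [hAdj₁, hAdj₂]
    rw [← SimpleGraph.card_neighborFinset_eq_degree, hNF,
      Finset.card_insert_of_notMem (by rwa [Finset.mem_singleton]), Finset.card_singleton]
  -- `T₀` is a colorful state
  have hT₀U : T₀ ⊆ U := (subU T₀).mp hT₀sub
  have hT₀z : AnotherColorful.HasZero T₀ := (AnotherColorful.hasZero_iff T₀).mpr hT₀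
  have hT₀card : T₀.card = d + 1 := by
    have hle : T₀.card ≤ d + 1 := by
      calc T₀.card = ∑ i, (T₀ ∩ S i).card := (cnt hT₀U).symm
        _ ≤ ∑ _i : Fin (d + 1), 1 := Finset.sum_le_sum (fun i _ => hT₀col i)
        _ = d + 1 := by simp
    by_contra h
    have hle' : T₀.card ≤ d := by omega
    obtain ⟨w, hw⟩ := hT₀z
    exact AnotherColorful.no_small hcard hdisj hgen hT₀U hle' hw
  have hStT₀ : St T₀ := ⟨hT₀U, hT₀card, hT₀z, fun i _ => hT₀col i⟩
  let v₀ : V := ⟨T₀, Finset.mem_powerset.mpr hT₀U⟩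
  have hdeg₀ : G.degree v₀ = 1 := degColorful v₀ hStT₀ (hT₀col 0)
  have hodd := G.odd_card_odd_degree_vertices_ne v₀ (by convert odd_one; convert hdeg₀)
  have hnonempty : (Finset.univ.filter fun w : V => w ≠ v₀ ∧ Odd (G.degree w)).Nonempty := by
    rw [← Finset.card_pos]
    obtain ⟨k, hk⟩ := hodd
    exact lt_of_lt_of_eq (by omega : 0 < 2 * k + 1) (by convert hk.symm)
  obtain ⟨w, hwmem⟩ := hnonempty
  rw [Finset.mem_filter] at hwmem
  obtain ⟨-, hwv₀, hwodd⟩ := hwmem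
  have hdegpos : 0 < G.degree w := by
    rcases Nat.eq_zero_or_pos (G.degree w) with h | h
    · rw [h] at hwodd
      simp at hwodd
    · exact h
  obtain ⟨B, hAdj⟩ := (G.degree_pos_iff_exists_adj w).mp hdegpos
  have hStw : St w.1 := hAdj.2.1
  have hw0le : (w.1 ∩ S 0).card ≤ 1 := by
    obtain ⟨h1, h2⟩ := stS0 hStw
    by_contra hgt
    have h2' : (w.1 ∩ S 0).card = 2 := by omega
    rw [degInter w hStw h2'] at hwodd
    simp [Nat.odd_iff] at hwodd
  refine ⟨w.1, ?_, ?_, ?_, ?_⟩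
  · intro h
    exact hwv₀ (Subtype.ext h)
  · exact (subU w.1).mpr hStw.1
  · intro i
    by_cases hi : i = 0
    · rw [hi]; exact hw0le
    · exact hStw.2.2.2 i hi
  · exact (AnotherColorful.hasZero_iff _).mp hStw.2.2.1
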